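/- Let q be an odd prime power and let a, b, c ∈ F_q with abc ≠ 0 and ab ≠ c², and let μ ∈ F_q be a nonsquare. Then the homogeneous quartic polynomial F(X,Y,Z) = cX²Z² − bZ⁴ − μY²(aX² − cZ²) is absolutely irreducible, i.e., irreducible as a polynomial over the algebraic closure of F_q. -/

import Mathlib

noncomputable section

open MvPolynomial

/-- The quartic curve `F(X,Y,Z) = cX²Z² − bZ⁴ − μY²(aX² − cZ²)`. -/
def quarticF {K : Type*} [Field K] (a b c μ : K) : MvPolynomial (Fin 3) K :=
  C c * X 0 ^ 2 * X 2 ^ 2 - C b * X 2 ^ 4 - C μ * X 1 ^ 2 * (C a * X 0 ^ 2 - C c * X 2 ^ 2)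

end

noncomputable section StmtTwelveHelpers

namespace StmtTwelve

section PolyHelpers

open Polynomial

variable {K : Type*} [Field K]

local notation "R" => Polynomial (Polynomial K)
local notation "Z" => (C (X : Polynomial K) : R)
local notation "k" r => (C (C r) : R)

lemma no_sq {a b c μ : K} (hb : b ≠ 0) (hc : c ≠ 0) (hμ : μ ≠ 0)
    (hab : a * b ≠ c ^ 2) (h2 : (2:K) ≠ 0) {α β : K} (hα : a * α ^ 2 = c) (hβ : c * β ^ 2 = b)
    (g : Polynomial K) (hg : g ^ 2 = C μ * (C a * X ^ 2 - C c) * (C c * X ^ 2 - C b)) : False := by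
  classical
  have ha : a ≠ 0 := by rintro rfl; simp at hα; exact hc hα.symm
  have h1 : (C a * X ^ 2 - C c : Polynomial K) ≠ 0 := fun h => by
    have := congrArg (eval 0) h; simp at this; exact hc this
  have h2' : (C c * X ^ 2 - C b : Polynomial K) ≠ 0 := fun h => by
    have := congrArg (eval 0) h; simp at this; exact hb this
  have hCμ : (C μ : Polynomial K) ≠ 0 := by simpa using hμ
  have hD0 : (C μ * (C a * X ^ 2 - C c) * (C c * X ^ 2 - C b) : Polynomial K) ≠ 0 :=
    mul_ne_zero (mul_ne_zero hCμ h1) h2'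
  have hg0 : g ≠ 0 := by rintro rfl; rw [← hg] at hD0; simp at hD0
  have hn1 : (C a * X ^ 2 - C c : Polynomial K).natDegree = 2 := by
    rw [show (C a * X ^ 2 - C c : Polynomial K) = C a * X ^ 2 + C 0 * X + C (-c) by
      simp; ring]
    exact natDegree_quadratic ha
  have hn2 : (C c * X ^ 2 - C b : Polynomial K).natDegree = 2 := by
    rw [show (C c * X ^ 2 - C b : Polynomial K) = C c * X ^ 2 + C 0 * X + C (-b) by
      simp; ring]
    exact natDegree_quadratic hc
  have hD4 : (C μ * (C a * X ^ 2 - C c) * (C c * X ^ 2 - C b) : Polynomial K).natDegree = 4 := by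
    rw [natDegree_mul (mul_ne_zero hCμ h1) h2', natDegree_mul hCμ h1, natDegree_C, hn1, hn2]
  have hgdeg : g.natDegree = 2 := by
    have : (g ^ 2).natDegree = 4 := by rw [hg, hD4]
    rw [natDegree_pow] at this; omega
  have hroot : ∀ x : K, (a * x ^ 2 = c ∨ c * x ^ 2 = b) → g.IsRoot x := by
    intro x hx
    have hev : (eval x g) ^ 2 = μ * (a * x ^ 2 - c) * (c * x ^ 2 - b) := by
      rw [← eval_pow, hg]; simp
    have : (eval x g) ^ 2 = 0 := by
      rcases hx with h | h
      · have h0 : a * x ^ 2 - c = 0 := by linear_combination h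
        rw [hev, h0]; ring
      · have h0 : c * x ^ 2 - b = 0 := by linear_combination h
        rw [hev, h0]; ring
    exact pow_eq_zero_iff (two_ne_zero) |>.mp this
  have hα0 : α ≠ 0 := by rintro rfl; simp at hα; exact hc hα.symm
  have hβ0 : β ≠ 0 := by rintro rfl; simp at hβ; exact hb hβ.symm
  have hsq : α ^ 2 ≠ β ^ 2 := by
    intro h
    apply hab
    linear_combination c * hα - a * hβ - a * c * h
  have hne1 : α ≠ -α := fun h => hα0 (by
    have h2α : 2 * α = 0 := by linear_combination h
    exact (mul_eq_zero.mp h2α).resolve_left h2)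
  have hne2 : β ≠ -β := fun h => hβ0 (by
    have h2β : 2 * β = 0 := by linear_combination h
    exact (mul_eq_zero.mp h2β).resolve_left h2)
  have hne3 : α ≠ β := fun h => hsq (by rw [h])
  have hne4 : α ≠ -β := fun h => hsq (by rw [h]; ring)
  have hne5 : -α ≠ β := fun h => hsq (by rw [← h]; ring)
  have hne6 : -α ≠ -β := fun h => hsq (by rw [neg_inj.mp h])
  have hS : ({α, -α, β, -β} : Finset K).card = 4 := by
    rw [Finset.card_insert_of_notMem (by simp [hne1, hne3, hne4]),
      Finset.card_insert_of_notMem (by simp [hne5, hne6]),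
      Finset.card_insert_of_notMem (by simp [hne2])]
    simp
  have hsub : ({α, -α, β, -β} : Finset K) ⊆ g.roots.toFinset := by
    intro x hx
    rw [Multiset.mem_toFinset, mem_roots']
    simp only [Finset.mem_insert, Finset.mem_singleton] at hx
    rcases hx with rfl | rfl | rfl | rfl
    · exact ⟨hg0, hroot x (Or.inl hα)⟩
    · exact ⟨hg0, hroot _ (Or.inl (by rw [neg_pow]; simpa using hα))⟩
    · exact ⟨hg0, hroot x (Or.inr hβ)⟩
    · exact ⟨hg0, hroot _ (Or.inr (by rw [neg_pow]; simpa using hβ))⟩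
  have : 4 ≤ g.natDegree := by
    calc 4 = ({α, -α, β, -β} : Finset K).card := hS.symm
    _ ≤ g.roots.toFinset.card := Finset.card_le_card hsub
    _ ≤ Multiset.card g.roots := g.roots.toFinset_card_le
    _ ≤ g.natDegree := g.card_roots'
  omega

set_option maxHeartbeats 2000000 in
lemma key_irred (a b c μ : K) (hb : b ≠ 0) (hc : c ≠ 0) (hμ : μ ≠ 0)
    (hab : a * b ≠ c ^ 2) (h2 : (2:K) ≠ 0) (hα : ∃ α : K, a * α ^ 2 = c)
    (hβ : ∃ β : K, c * β ^ 2 = b) :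
    Irreducible (C ((k c) * Z ^ 2 * X ^ 2 - (k b) * Z ^ 4)
      - C ((k μ) * ((k a) * X ^ 2 - (k c) * Z ^ 2)) * X ^ 2 : Polynomial R) := by
  classical
  have ha : a ≠ 0 := by
    obtain ⟨α, hα⟩ := hα; rintro rfl; simp at hα; exact hc hα.symm
  set A : R := (k μ) * ((k a) * X ^ 2 - (k c) * Z ^ 2) with hA
  set B : R := (k c) * Z ^ 2 * X ^ 2 - (k b) * Z ^ 4 with hB
  have hA0 : A ≠ 0 := by
    intro h
    have := congrArg ((evalRingHom (1:K)).comp (evalRingHom (0 : Polynomial K))) h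
    simp [hA] at this
    rcases this with h | h
    exacts [hμ h, hc h]
  have hB0 : B ≠ 0 := by
    intro h
    have := congrArg ((evalRingHom (1:K)).comp (evalRingHom (0 : Polynomial K))) h
    simp [hB] at this
    exact hb this
  -- primitivity
  have prim : (C B - C A * X ^ 2 : Polynomial R).IsPrimitive := by
    intro r hr
    obtain ⟨q, hq⟩ := hr
    have hrB : r ∣ B := ⟨q.coeff 0, by
      have h0 := congrArg (fun f => Polynomial.coeff f 0) hq
      simpa [coeff_X_pow] using h0⟩
    have hrA : r ∣ A := by
      rw [← dvd_neg]
      exact ⟨q.coeff 2, by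
        have h2c := congrArg (fun f => Polynomial.coeff f 2) hq
        simpa [coeff_X_pow] using h2c⟩
    have e1 : (k c) * Z ^ 2 * A - (k μ) * (k a) * B
        = ((k μ) * ((k a) * (k b) - (k c) ^ 2)) * Z ^ 4 := by rw [hA, hB]; ring
    have e2 : (k μ) * (k c) ^ 2 * B + (-((k b) * (k c)) * Z ^ 2 + ((k c) ^ 2 - (k a) * (k b)) * X ^ 2) * A
        = ((k μ) * (k a) * ((k c) ^ 2 - (k a) * (k b))) * X ^ 4 := by rw [hA, hB]; ring
    have habne : a * b - c ^ 2 ≠ 0 := sub_ne_zero.mpr hab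
    have hu1 : IsUnit ((k μ) * ((k a) * (k b) - (k c) ^ 2) : R) := by
      have : ((k μ) * ((k a) * (k b) - (k c) ^ 2) : R) = k (μ * (a * b - c ^ 2)) := by
        simp [map_mul, map_sub, map_pow]
      rw [this]
      exact isUnit_C.mpr (isUnit_C.mpr (mul_ne_zero hμ habne).isUnit)
    have hu2 : IsUnit ((k μ) * (k a) * ((k c) ^ 2 - (k a) * (k b)) : R) := by
      have : ((k μ) * (k a) * ((k c) ^ 2 - (k a) * (k b)) : R) = k (μ * a * (c ^ 2 - a * b)) := by
        simp [map_mul, map_sub, map_pow]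
      rw [this]
      refine isUnit_C.mpr (isUnit_C.mpr ?_)
      exact (mul_ne_zero (mul_ne_zero hμ ha) (fun h => habne (by linear_combination -h))).isUnit
    have hdZ : r ∣ Z ^ 4 := by
      have h1 : r ∣ ((k μ) * ((k a) * (k b) - (k c) ^ 2)) * Z ^ 4 :=
        e1 ▸ dvd_sub (hrA.mul_left _) (hrB.mul_left _)
      rcases hu1 with ⟨u, hu⟩
      rw [← hu] at h1
      exact Units.dvd_mul_left.mp h1
    have hdX : r ∣ (X : R) ^ 4 := by
      have h1 : r ∣ ((k μ) * (k a) * ((k c) ^ 2 - (k a) * (k b))) * X ^ 4 :=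
        e2 ▸ dvd_add (hrB.mul_left _) (hrA.mul_left _)
      rcases hu2 with ⟨u, hu⟩
      rw [← hu] at h1
      exact Units.dvd_mul_left.mp h1
    by_contra hru
    have hr0 : r ≠ 0 := by
      rintro rfl
      exact pow_ne_zero 4 (X_ne_zero : (X : Polynomial (Polynomial K)) ≠ 0) (zero_dvd_iff.mp hdX)
    obtain ⟨π, hπirr, hπr⟩ := WfDvdMonoid.exists_irreducible_factor hru hr0
    have hπX : π ∣ (X : R) := (UniqueFactorizationMonoid.irreducible_iff_prime.mp
      hπirr).dvd_of_dvd_pow (hπr.trans hdX)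
    have hπZ : π ∣ (Z : R) := (UniqueFactorizationMonoid.irreducible_iff_prime.mp
      hπirr).dvd_of_dvd_pow (hπr.trans hdZ)
    have hXZ : (X : R) ∣ Z :=
      (hπirr.associated_of_dvd (Polynomial.prime_X.irreducible) hπX).symm.dvd.trans hπZ
    have := Polynomial.X_dvd_iff.mp hXZ
    simp at this
  obtain ⟨α, hα⟩ := hα
  obtain ⟨β, hβ⟩ := hβ
  letI : NormalizationMonoid (Polynomial (Polynomial K)) :=
    UniqueFactorizationMonoid.normalizationMonoid.toNormalizationMonoid
  letI : NormalizedGCDMonoid (Polynomial (Polynomial K)) :=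
    UniqueFactorizationMonoid.toNormalizedGCDMonoid _
  set FF := FractionRing (Polynomial (Polynomial K)) with hFF
  set φ := algebraMap (Polynomial (Polynomial K)) FF with hφ
  have hinj : Function.Injective φ := IsFractionRing.injective _ _
  rw [prim.irreducible_iff_irreducible_map_fraction_map (K := FF)]
  have hqmap : (C B - C A * X ^ 2 : Polynomial R).map φ = C (φ B) - C (φ A) * X ^ 2 := by
    simp
  rw [hqmap]
  have hφA : φ A ≠ 0 := fun h => hA0 (hinj (by simpa using h))
  have hφB : φ B ≠ 0 := fun h => hB0 (hinj (by simpa using h))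
  have nd : (C (φ B) - C (φ A) * X ^ 2 : Polynomial FF).natDegree = 2 := by
    rw [show (C (φ B) - C (φ A) * X ^ 2 : Polynomial FF)
        = C (-(φ A)) * X ^ 2 + C 0 * X + C (φ B) by simp; ring]
    exact natDegree_quadratic (neg_ne_zero.mpr hφA)
  rw [irreducible_iff_roots_eq_zero_of_degree_le_three (by omega) (by omega)]
  rw [Multiset.eq_zero_iff_forall_notMem]
  intro y hy
  rw [mem_roots', IsRoot] at hy
  have hyev : φ B - φ A * y ^ 2 = 0 := by
    have := hy.2
    simpa using this
  set D : R := (k μ) * ((k a) * X ^ 2 - (k c) * Z ^ 2) * ((k c) * X ^ 2 - (k b) * Z ^ 2) with hD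
  have hABD : A * B = Z ^ 2 * D := by rw [hA, hB, hD]; ring
  have hv : φ Z ≠ 0 := fun h => by
    have h1 : (Z : R) = 0 := hinj (by simpa using h)
    have := congrArg (fun f => Polynomial.coeff f 0) h1
    simp at this
  set w : FF := y * φ A / φ Z with hw
  have hwsq : w ^ 2 = φ D := by
    have hAB : φ A * φ B = φ D * (φ Z) ^ 2 := by
      calc φ A * φ B = φ (A * B) := (map_mul φ A B).symm
        _ = φ (Z ^ 2 * D) := by rw [hABD]
        _ = φ D * (φ Z) ^ 2 := by rw [map_mul, map_pow]; ring
    rw [hw]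
    rw [div_pow, div_eq_iff (pow_ne_zero 2 hv)]
    linear_combination (-(φ A)) * hyev + hAB
  have hint : IsIntegral (Polynomial (Polynomial K)) w := by
    refine ⟨X ^ 2 - C D, monic_X_pow_sub_C D two_ne_zero, ?_⟩
    simp [eval₂_sub, eval₂_pow, hwsq, hφ]
  obtain ⟨d, hd⟩ := IsIntegrallyClosed.isIntegral_iff.mp hint
  have hd2 : d ^ 2 = D := hinj (by rw [map_pow, hd, hwsq])
  have hcontra := congrArg (Polynomial.mapRingHom (evalRingHom (1 : K))) hd2
  rw [map_pow, hD] at hcontra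
  simp only [coe_mapRingHom, Polynomial.map_mul, Polynomial.map_sub, Polynomial.map_pow,
    map_C, map_X, coe_evalRingHom, eval_C, eval_X, map_one, one_pow, mul_one,
    Polynomial.C_1] at hcontra
  refine no_sq hb hc hμ hab h2 hα hβ (d.map (evalRingHom (1 : K))) ?_
  rw [hcontra]

end PolyHelpers

section TransferHelpers

open MvPolynomial

variable {K : Type*} [Field K]

def Phi (K : Type*) [Field K] : MvPolynomial (Fin 3) K ≃+* Polynomial (Polynomial (Polynomial K)) :=
  (renameEquiv K (Equiv.swap 0 1)).toRingEquiv.trans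
    ((finSuccEquiv K 2).toRingEquiv.trans
      (Polynomial.mapEquiv ((finSuccEquiv K 1).toRingEquiv.trans
        (Polynomial.mapEquiv ((finSuccEquiv K 0).toRingEquiv.trans
          (Polynomial.mapEquiv (isEmptyRingEquiv K (Fin 0))))))))

lemma aux1 : (Fin.cases Polynomial.X (fun k => Polynomial.C (X k)) (1 : Fin 3) :
    Polynomial (MvPolynomial (Fin 2) K)) = Polynomial.C (X 0) := rfl
lemma aux2 : (Fin.cases Polynomial.X (fun k => Polynomial.C (X k)) (2 : Fin 3) :
    Polynomial (MvPolynomial (Fin 2) K)) = Polynomial.C (X 1) := rfl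
lemma aux3 : (Fin.cases Polynomial.X (fun k => Polynomial.C (X k)) (1 : Fin 2) :
    Polynomial (MvPolynomial (Fin 1) K)) = Polynomial.C (X 0) := rfl
lemma aux4 : ((Equiv.swap (0:Fin 3) 1) 2) = 2 := by decide

lemma Phi_C (r : K) : Phi K (C r) = Polynomial.C (Polynomial.C (Polynomial.C r)) := by
  simp [Phi, finSuccEquiv_apply, isEmptyRingEquiv]
  exact MvPolynomial.coeff_zero_C (σ := Fin 0) r

lemma Phi_X0 : Phi K (X 0) = Polynomial.C Polynomial.X := by
  simp [Phi, finSuccEquiv_apply, isEmptyRingEquiv, aux1]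

lemma Phi_X1 : Phi K (X 1) = Polynomial.X := by
  simp [Phi, finSuccEquiv_apply, isEmptyRingEquiv]

lemma Phi_X2 : Phi K (X 2) = Polynomial.C (Polynomial.C Polynomial.X) := by
  simp [Phi, finSuccEquiv_apply, isEmptyRingEquiv, aux4, aux2, aux3]

end TransferHelpers

end StmtTwelve

end StmtTwelveHelpers

noncomputable section

open MvPolynomial

/-- for `q` odd, `abc ≠ 0`, `ab ≠ c²` and `μ` a nonsquare, the quartic
`cX²Z² − bZ⁴ − μY²(aX² − cZ²)` is absolutely irreducible. -/
theorem stmt12 (F : Type*) [Field F] [Fintype F] (hodd : Odd (Fintype.card F))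
    (a b c μ : F) (habc : a * b * c ≠ 0) (hC : a * b ≠ c ^ 2) (hμ : ¬ IsSquare μ) :
    Irreducible (MvPolynomial.map (algebraMap F (AlgebraicClosure F)) (quarticF a b c μ)) := by
  set K := AlgebraicClosure F with hK
  have inj : Function.Injective (algebraMap F K) := (algebraMap F K).injective
  have ha : a ≠ 0 := fun h => habc (by rw [h]; ring)
  have hb : b ≠ 0 := fun h => habc (by rw [h]; ring)
  have hc : c ≠ 0 := fun h => habc (by rw [h]; ring)
  have hμ0 : μ ≠ 0 := fun h => hμ ⟨0, by rw [h]; ring⟩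
  have h2F : (2 : F) ≠ 0 := by
    intro h
    have hdvd : ringChar F ∣ 2 := (CharP.cast_eq_zero_iff F (ringChar F) 2).mp (by exact_mod_cast h)
    have hprime : (ringChar F).Prime := CharP.char_is_prime F (ringChar F)
    have h2 : ringChar F = 2 := (Nat.prime_dvd_prime_iff_eq hprime Nat.prime_two).mp hdvd
    have := FiniteField.even_card_iff_char_two.mp h2
    have := Nat.odd_iff.mp hodd
    omega
  set a' := algebraMap F K a with ha'
  set b' := algebraMap F K b with hb'
  set c' := algebraMap F K c with hc'
  set μ' := algebraMap F K μ with hμ'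
  have ha'0 : a' ≠ 0 := fun h => ha (inj (by rw [map_zero, ← h]))
  have hb'0 : b' ≠ 0 := fun h => hb (inj (by rw [map_zero, ← h]))
  have hc'0 : c' ≠ 0 := fun h => hc (inj (by rw [map_zero, ← h]))
  have hμ'0 : μ' ≠ 0 := fun h => hμ0 (inj (by rw [map_zero, ← h]))
  have hab' : a' * b' ≠ c' ^ 2 := fun h => hC (inj (by rw [map_mul, map_pow]; exact h))
  have h2K : (2 : K) ≠ 0 := by
    have h' := inj.ne h2F
    rwa [map_ofNat, map_zero] at h'
  have hα : ∃ α : K, a' * α ^ 2 = c' := by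
    obtain ⟨α, hα⟩ := IsAlgClosed.exists_pow_nat_eq (c' / a') (n := 2) zero_lt_two
    exact ⟨α, by rw [hα, mul_div_assoc', mul_comm, mul_div_assoc, div_self ha'0, mul_one]⟩
  have hβ : ∃ β : K, c' * β ^ 2 = b' := by
    obtain ⟨β, hβ⟩ := IsAlgClosed.exists_pow_nat_eq (b' / c') (n := 2) zero_lt_two
    exact ⟨β, by rw [hβ, mul_div_assoc', mul_comm, mul_div_assoc, div_self hc'0, mul_one]⟩
  have hmap : MvPolynomial.map (algebraMap F K) (quarticF a b c μ) = quarticF a' b' c' μ' := by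
    simp [quarticF, ha', hb', hc', hμ']
  rw [hmap, ← MulEquiv.irreducible_iff (StmtTwelve.Phi K)]
  have hPhi : StmtTwelve.Phi K (quarticF a' b' c' μ')
      = Polynomial.C (Polynomial.C (Polynomial.C c') * Polynomial.C Polynomial.X ^ 2 *
            Polynomial.X ^ 2 - Polynomial.C (Polynomial.C b') * Polynomial.C Polynomial.X ^ 4)
        - Polynomial.C (Polynomial.C (Polynomial.C μ') *
            (Polynomial.C (Polynomial.C a') * Polynomial.X ^ 2 -
              Polynomial.C (Polynomial.C c') * Polynomial.C Polynomial.X ^ 2)) *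
          Polynomial.X ^ 2 := by
    simp only [quarticF, map_sub, map_mul, map_pow, StmtTwelve.Phi_C, StmtTwelve.Phi_X0,
      StmtTwelve.Phi_X1, StmtTwelve.Phi_X2]
    ring
  rw [hPhi]
  exact StmtTwelve.key_irred a' b' c' μ' hb'0 hc'0 hμ'0 hab' h2K hα hβ
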